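/- Let s = (s_1,...,s_k) be an injective sequence in [n] with k ≥ 2, and let s' be the sequence obtained from s by swapping the last two entries s_{k-1} and s_k. With Y defined by the explicit Laurent formula of Corollary 4.2, the identity Y_{s'(k-1)} · Y_{s(k-1)} − Y_{s(k-2)} · Y_s = (∏_{r=1}^{k-2} A_{s_r})^2 · (∏_{ρ∈[n]∖{s_1,...,s_k}} X_ρ)^2 holds in Frac(Z[A_1,...,A_n, X_1,...,X_n]). -/

import Mathlib

open Finset

/-- The ambient field `F = Frac(ℤ[A_1,...,A_n, X_1,...,X_n])`. -/
abbrev Kn (n : ℕ) := FractionRing (MvPolynomial (Fin n ⊕ Fin n) ℤ)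

/-- The coefficient `A_i` as an element of the ambient field. -/
noncomputable def Av (n : ℕ) (i : Fin n) : Kn n :=
  algebraMap (MvPolynomial (Fin n ⊕ Fin n) ℤ) (Kn n) (MvPolynomial.X (Sum.inl i))

/-- The initial cluster variable `X_i` as an element of the ambient field. -/
noncomputable def Xv (n : ℕ) (i : Fin n) : Kn n :=
  algebraMap (MvPolynomial (Fin n ⊕ Fin n) ℤ) (Kn n) (MvPolynomial.X (Sum.inr i))

/-- The explicit Laurent formula for the cluster variable `Y_s` (Corollary 4.2). -/
noncomputable def Yvar {F : Type*} [Field F] {n : ℕ} (A X : Fin n → F) {k : ℕ}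
    (s : Fin k → Fin n) : F :=
  ((∑ i : Fin k, (∏ j ∈ univ.erase i, A (s j)) * ∏ j ∈ univ.erase (s i), X j) +
      ∏ i : Fin k, A (s i)) / ∏ i : Fin k, X (s i)

lemma prod_erase_eq' {F : Type*} [Field F] {ι : Type*} [Fintype ι] [DecidableEq ι]
    (g : ι → F) (i : ι) (hg : g i ≠ 0) :
    ∏ j ∈ univ.erase i, g j = (∏ j, g j) * (g i)⁻¹ := by
  rw [eq_mul_inv_iff_mul_eq₀ hg, Finset.prod_erase_mul _ _ (mem_univ i)]

lemma Yvar_eq' {F : Type*} [Field F] {n m : ℕ} {A X : Fin n → F} (hA : ∀ i, A i ≠ 0)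
    (hX : ∀ i, X i ≠ 0) (s : Fin m → Fin n) :
    Yvar A X s = ((∏ j : Fin n, X j) * ((∏ i : Fin m, (A (s i) * X (s i))) *
        ∑ i : Fin m, (A (s i) * X (s i))⁻¹) +
        (∏ i : Fin m, A (s i)) * ∏ i : Fin m, X (s i)) / (∏ i : Fin m, X (s i)) ^ 2 := by
  have hXT : (∏ i : Fin m, X (s i)) ≠ 0 := prod_ne_zero_iff.mpr fun i _ => hX _
  have hkey : ((∑ i : Fin m, (∏ j ∈ univ.erase i, A (s j)) * ∏ j ∈ univ.erase (s i), X j) +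
      ∏ i : Fin m, A (s i)) * (∏ i : Fin m, X (s i))
      = (∏ j : Fin n, X j) * ((∏ i : Fin m, (A (s i) * X (s i))) *
        ∑ i : Fin m, (A (s i) * X (s i))⁻¹) +
        (∏ i : Fin m, A (s i)) * ∏ i : Fin m, X (s i) := by
    rw [add_mul, Finset.mul_sum, Finset.mul_sum, Finset.sum_mul]
    congr 1
    refine Finset.sum_congr rfl fun i _ => ?_
    have hp : A (s i) * X (s i) ≠ 0 := mul_ne_zero (hA _) (hX _)
    rw [← prod_erase_eq' (fun j => A (s j) * X (s j)) i hp, Finset.prod_mul_distrib]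
    have h2 : (∏ i : Fin m, X (s i)) = (∏ j ∈ univ.erase i, X (s j)) * X (s i) :=
      (Finset.prod_erase_mul _ _ (mem_univ i)).symm
    have h3 : (∏ j : Fin n, X j) = (∏ j ∈ univ.erase (s i), X j) * X (s i) :=
      (Finset.prod_erase_mul _ _ (mem_univ (s i))).symm
    rw [h2, h3]; ring
  unfold Yvar
  rw [div_eq_div_iff hXT (pow_ne_zero 2 hXT), sq, ← mul_assoc, hkey]

lemma final_identity {F : Type*} [Field F] (Q B X0 R c d y z : F) (hc : c ≠ 0) (hd : d ≠ 0)
    (hy : y ≠ 0) (hz : z ≠ 0) (hX0 : X0 ≠ 0) :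
    (Q * (B * X0 * (d * z) * (R + (d * z)⁻¹)) + B * d * (X0 * z)) / (X0 * z) ^ 2 *
        ((Q * (B * X0 * (c * y) * (R + (c * y)⁻¹)) + B * c * (X0 * y)) / (X0 * y) ^ 2) -
      (Q * (B * X0 * R) + B * X0) / X0 ^ 2 *
        ((Q * (B * X0 * (c * y) * (d * z) * (R + (c * y)⁻¹ + (d * z)⁻¹)) +
          B * c * d * (X0 * y * z)) / (X0 * y * z) ^ 2) =
      B ^ 2 * (Q / (X0 * y * z)) ^ 2 := by
  have h1 : B * X0 * (d * z) * (R + (d * z)⁻¹) = d * z * (B * X0 * R) + B * X0 := by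
    field_simp
  have h2 : B * X0 * (c * y) * (R + (c * y)⁻¹) = c * y * (B * X0 * R) + B * X0 := by
    field_simp
  have h3 : B * X0 * (c * y) * (d * z) * (R + (c * y)⁻¹ + (d * z)⁻¹)
      = (c * y) * (d * z) * (B * X0 * R) + (c * y + d * z) * (B * X0) := by
    field_simp; ring
  rw [h1, h2, h3]
  generalize B * X0 * R = S0
  field_simp
  ring_nf

/-- Swapping the last two entries of an activation sequence is a mutation:
`Y_{s'(k-1)}·Y_{s(k-1)} − Y_{s(k-2)}·Y_s = (∏_{r=1}^{k-2} A_{s_r})²·(∏_{ρ∉s} X_ρ)²`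
(here the sequence has length `k+2`, so "k−2" is `k`). -/
theorem stmt6 (n k : ℕ) (s : Fin (k + 2) → Fin n) (hs : Function.Injective s)
    (s' : Fin (k + 2) → Fin n)
    (hs' : s' = s ∘ Equiv.swap ⟨k, by omega⟩ ⟨k + 1, by omega⟩) :
    Yvar (Av n) (Xv n) (fun i : Fin (k + 1) => s' i.castSucc) *
        Yvar (Av n) (Xv n) (fun i : Fin (k + 1) => s i.castSucc) -
      Yvar (Av n) (Xv n) (fun i : Fin k => s (Fin.castLE (by omega) i)) *
        Yvar (Av n) (Xv n) s =
      (∏ r : Fin k, Av n (s (Fin.castLE (by omega) r))) ^ 2 *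
        (∏ ρ ∈ univ \ image s univ, Xv n ρ) ^ 2 := by
  have hA : ∀ i, Av n i ≠ 0 := fun i => by
    simp only [Av, ne_eq, IsFractionRing.to_map_eq_zero_iff]
    exact MvPolynomial.X_ne_zero _
  have hX : ∀ i, Xv n i ≠ 0 := fun i => by
    simp only [Xv, ne_eq, IsFractionRing.to_map_eq_zero_iff]
    exact MvPolynomial.X_ne_zero _
  -- index facts for s'
  have h's : ∀ i : Fin k, s' (i.castSucc.castSucc) = s (Fin.castLE (by omega) i) := by
    intro i
    rw [hs']
    simp only [Function.comp_apply]
    rw [Equiv.swap_apply_of_ne_of_ne]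
    · rfl
    · exact fun h => by have := congrArg Fin.val h; simp at this; omega
    · exact fun h => by have := congrArg Fin.val h; simp at this; omega
  have h'l : s' ((Fin.last k).castSucc) = s (Fin.last (k + 1)) := by
    rw [hs']
    simp only [Function.comp_apply]
    have : ((Fin.last k).castSucc : Fin (k + 2)) = ⟨k, by omega⟩ := rfl
    rw [this, Equiv.swap_apply_left]
    rfl
  -- component equalities
  have hS2 : (∑ i : Fin (k + 2), (Av n (s i) * Xv n (s i))⁻¹)
      = (∑ i : Fin k, (Av n (s (Fin.castLE (by omega) i)) * Xv n (s (Fin.castLE (by omega) i)))⁻¹)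
        + (Av n (s ⟨k, by omega⟩) * Xv n (s ⟨k, by omega⟩))⁻¹
        + (Av n (s ⟨k + 1, by omega⟩) * Xv n (s ⟨k + 1, by omega⟩))⁻¹ := by
    rw [Fin.sum_univ_castSucc (n := k + 1), Fin.sum_univ_castSucc (n := k)]
    rfl
  have hA2 : (∏ i : Fin (k + 2), Av n (s i))
      = (∏ r : Fin k, Av n (s (Fin.castLE (by omega) r))) * Av n (s ⟨k, by omega⟩) *
        Av n (s ⟨k + 1, by omega⟩) := by
    rw [Fin.prod_univ_castSucc (n := k + 1), Fin.prod_univ_castSucc (n := k)]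
    rfl
  have hX2 : (∏ i : Fin (k + 2), Xv n (s i))
      = (∏ r : Fin k, Xv n (s (Fin.castLE (by omega) r))) * Xv n (s ⟨k, by omega⟩) *
        Xv n (s ⟨k + 1, by omega⟩) := by
    rw [Fin.prod_univ_castSucc (n := k + 1), Fin.prod_univ_castSucc (n := k)]
    rfl
  have hP2 : (∏ i : Fin (k + 2), (Av n (s i) * Xv n (s i)))
      = (∏ r : Fin k, Av n (s (Fin.castLE (by omega) r))) *
          (∏ r : Fin k, Xv n (s (Fin.castLE (by omega) r))) *
        (Av n (s ⟨k, by omega⟩) * Xv n (s ⟨k, by omega⟩)) *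
        (Av n (s ⟨k + 1, by omega⟩) * Xv n (s ⟨k + 1, by omega⟩)) := by
    rw [Fin.prod_univ_castSucc (n := k + 1), Fin.prod_univ_castSucc (n := k),
      Finset.prod_mul_distrib]
    rfl
  -- prefix of s
  have hS1 : (∑ i : Fin (k + 1), (Av n (s i.castSucc) * Xv n (s i.castSucc))⁻¹)
      = (∑ i : Fin k, (Av n (s (Fin.castLE (by omega) i)) * Xv n (s (Fin.castLE (by omega) i)))⁻¹)
        + (Av n (s ⟨k, by omega⟩) * Xv n (s ⟨k, by omega⟩))⁻¹ := by
    rw [Fin.sum_univ_castSucc (n := k)]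
    rfl
  have hA1 : (∏ i : Fin (k + 1), Av n (s i.castSucc))
      = (∏ r : Fin k, Av n (s (Fin.castLE (by omega) r))) * Av n (s ⟨k, by omega⟩) := by
    rw [Fin.prod_univ_castSucc (n := k)]
    rfl
  have hX1 : (∏ i : Fin (k + 1), Xv n (s i.castSucc))
      = (∏ r : Fin k, Xv n (s (Fin.castLE (by omega) r))) * Xv n (s ⟨k, by omega⟩) := by
    rw [Fin.prod_univ_castSucc (n := k)]
    rfl
  have hP1 : (∏ i : Fin (k + 1), (Av n (s i.castSucc) * Xv n (s i.castSucc)))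
      = (∏ r : Fin k, Av n (s (Fin.castLE (by omega) r))) *
          (∏ r : Fin k, Xv n (s (Fin.castLE (by omega) r))) *
        (Av n (s ⟨k, by omega⟩) * Xv n (s ⟨k, by omega⟩)) := by
    rw [Fin.prod_univ_castSucc (n := k), Finset.prod_mul_distrib]
    rfl
  -- prefix of s'
  have hS1' : (∑ i : Fin (k + 1), (Av n (s' i.castSucc) * Xv n (s' i.castSucc))⁻¹)
      = (∑ i : Fin k, (Av n (s (Fin.castLE (by omega) i)) * Xv n (s (Fin.castLE (by omega) i)))⁻¹)
        + (Av n (s ⟨k + 1, by omega⟩) * Xv n (s ⟨k + 1, by omega⟩))⁻¹ := by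
    rw [Fin.sum_univ_castSucc (n := k)]
    simp only [h's, h'l]
    rfl
  have hA1' : (∏ i : Fin (k + 1), Av n (s' i.castSucc))
      = (∏ r : Fin k, Av n (s (Fin.castLE (by omega) r))) * Av n (s ⟨k + 1, by omega⟩) := by
    rw [Fin.prod_univ_castSucc (n := k)]
    simp only [h's, h'l]
    rfl
  have hX1' : (∏ i : Fin (k + 1), Xv n (s' i.castSucc))
      = (∏ r : Fin k, Xv n (s (Fin.castLE (by omega) r))) * Xv n (s ⟨k + 1, by omega⟩) := by
    rw [Fin.prod_univ_castSucc (n := k)]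
    simp only [h's, h'l]
    rfl
  have hP1' : (∏ i : Fin (k + 1), (Av n (s' i.castSucc) * Xv n (s' i.castSucc)))
      = (∏ r : Fin k, Av n (s (Fin.castLE (by omega) r))) *
          (∏ r : Fin k, Xv n (s (Fin.castLE (by omega) r))) *
        (Av n (s ⟨k + 1, by omega⟩) * Xv n (s ⟨k + 1, by omega⟩)) := by
    rw [Fin.prod_univ_castSucc (n := k), Finset.prod_mul_distrib]
    simp only [h's, h'l]
    rfl
  have hP0 : (∏ i : Fin k, (Av n (s (Fin.castLE (by omega) i)) * Xv n (s (Fin.castLE (by omega) i))))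
      = (∏ r : Fin k, Av n (s (Fin.castLE (by omega) r))) *
        (∏ r : Fin k, Xv n (s (Fin.castLE (by omega) r))) := Finset.prod_mul_distrib
  have hX0 : (∏ r : Fin k, Xv n (s (Fin.castLE (by omega) r))) ≠ 0 :=
    prod_ne_zero_iff.mpr fun _ _ => hX _
  have hQc : (∏ ρ ∈ univ \ image s univ, Xv n ρ)
      = (∏ j : Fin n, Xv n j) /
        ((∏ r : Fin k, Xv n (s (Fin.castLE (by omega) r))) * Xv n (s ⟨k, by omega⟩) *
          Xv n (s ⟨k + 1, by omega⟩)) := by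
    have hden : ((∏ r : Fin k, Xv n (s (Fin.castLE (by omega) r))) * Xv n (s ⟨k, by omega⟩) *
        Xv n (s ⟨k + 1, by omega⟩)) ≠ 0 :=
      mul_ne_zero (mul_ne_zero hX0 (hX _)) (hX _)
    rw [eq_div_iff hden, ← hX2,
      ← Finset.prod_image (f := Xv n) (g := s) (fun a _ b _ h => hs h)]
    exact Finset.prod_sdiff (subset_univ _)
  simp only [Yvar_eq' hA hX]
  rw [hS2, hA2, hX2, hP2, hS1, hA1, hX1, hP1, hS1', hA1', hX1', hP1', hP0, hQc]
  exact final_identity _ _ _ _ _ _ _ _ (hA _) (hA _) (hX _) (hX _) hX0
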